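/- Let n ≥ 1, a_k, b_k ∈ ℝ with a₁ ≠ 0, and suppose x₁(t),...,x_n(t) are continuous real functions on an unbounded interval with (-1)^k e_k(x₁(t),...,x_n(t)) = a_k t + b_k for k = 1,...,n. Then as t → ∞, exactly one of the functions x_i(t) tends to infinity in absolute value (i.e., |x_i(t)| → ∞ for exactly one index i, while the others remain bounded). -/

import Mathlib

open Polynomial Filter

set_option maxHeartbeats 2000000 in
/-- If `x₁(t),…,x_n(t)` are continuous on `(T,∞)` and their signed elementary
symmetric functions (the coefficients of `∏ (z - x_i(t))`) are affine in `t`,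
`a_k t + b_k`, with `a₁ ≠ 0`, then as `t → ∞` exactly one of the `x_i(t)`
tends to infinity in absolute value, while all the others remain bounded. -/
theorem exactly_one_unbounded_node (n : ℕ) (hn : 1 ≤ n) (T : ℝ)
    (x : Fin n → ℝ → ℝ) (a b : ℕ → ℝ)
    (hcont : ∀ i, ContinuousOn (x i) (Set.Ioi T))
    (hcoef : ∀ t ∈ Set.Ioi T, ∀ k, 1 ≤ k → k ≤ n →
      (∏ i, (X - C (x i t))).coeff (n - k) = a k * t + b k)
    (ha : a 1 ≠ 0) :
    ∃ i : Fin n,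
      Tendsto (fun t => |x i t|) atTop atTop ∧
      ∀ j, j ≠ i → ∃ C : ℝ, ∀ᶠ t in atTop, |x j t| ≤ C := by
  -- the sum of the roots
  have hsum : ∀ t ∈ Set.Ioi T, (∑ i, x i t) = -(a 1 * t + b 1) := by
    intro t ht
    have h1 := hcoef t ht 1 le_rfl hn
    have h2 : (∏ i : Fin n, (X - C (x i t))).coeff (n - 1) = -∑ i, x i t := by
      have := Polynomial.prod_X_sub_C_coeff_card_pred (Finset.univ : Finset (Fin n))
        (fun i => x i t) (by simpa using (show 0 < n by omega))
      simpa using this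
    rw [h2] at h1
    linarith
  -- each x j t is a root, yielding the polynomial equation
  have hroot : ∀ t ∈ Set.Ioi T, ∀ j : Fin n,
      (x j t) ^ n + ∑ m ∈ Finset.range n, (a (n - m) * t + b (n - m)) * (x j t) ^ m = 0 := by
    intro t ht j
    set P : Polynomial ℝ := ∏ i : Fin n, (X - C (x i t)) with hP
    have hmon : P.Monic := monic_prod_of_monic _ _ fun i _ => monic_X_sub_C _
    have hdeg : P.natDegree = n := by
      rw [hP, Polynomial.natDegree_prod]
      · simp [natDegree_X_sub_C]
      · intro i _; exact X_sub_C_ne_zero _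
    have heval : P.eval (x j t) = 0 := by
      rw [hP, Polynomial.eval_prod]
      exact Finset.prod_eq_zero (Finset.mem_univ j) (by simp)
    have hE := Polynomial.eval_eq_sum_range (p := P) (x := x j t)
    rw [hdeg, Finset.sum_range_succ] at hE
    rw [heval] at hE
    have hlead : P.coeff n = 1 := by
      have := hmon.leadingCoeff
      rwa [Polynomial.leadingCoeff, hdeg] at this
    have hco : ∀ m ∈ Finset.range n, P.coeff m = a (n - m) * t + b (n - m) := by
      intro m hm
      rw [Finset.mem_range] at hm
      have := hcoef t ht (n - m) (by omega) (by omega)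
      rwa [show n - (n - m) = m by omega] at this
    rw [Finset.sum_congr rfl (fun m hm => by rw [hco m hm])] at hE
    rw [hlead] at hE
    linarith [hE]
  -- constants
  obtain ⟨α, hα⟩ : ∃ α : ℝ, α = |a 1| := ⟨_, rfl⟩
  have hα0 : 0 < α := hα ▸ abs_pos.mpr ha
  obtain ⟨A, hA⟩ : ∃ A : ℝ, A = ∑ m ∈ Finset.range n, (|a (n - m)| + |b (n - m)|) := ⟨_, rfl⟩
  have hA0 : 0 ≤ A := hA ▸ Finset.sum_nonneg fun m _ => by positivity
  have hAα : α ≤ A := by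
    have hmem : n - 1 ∈ Finset.range n := by
      rw [Finset.mem_range]; omega
    have h := Finset.single_le_sum (f := fun m => (|a (n - m)| + |b (n - m)|))
      (fun m _ => by positivity) hmem
    rw [show n - (n - 1) = 1 by omega] at h
    have hb : (0:ℝ) ≤ |b 1| := abs_nonneg _
    rw [hα, hA]; linarith
  -- the key estimate from the root equation
  have L1 : ∀ t ∈ Set.Ioi T, 1 ≤ t → ∀ j : Fin n, 1 ≤ |x j t| →
      |x j t + (a 1 * t + b 1)| * |x j t| ≤ A * t := by
    intro t ht ht1 j hy1
    set y := x j t with hy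
    have ht0 : (0:ℝ) < t := by linarith
    have key := hroot t ht j
    rw [show n = (n - 1) + 1 by omega, Finset.sum_range_succ,
      show (n-1) + 1 = n by omega, show n - (n - 1) = 1 by omega] at key
    have hfac : (y + (a 1 * t + b 1)) * y ^ (n - 1) =
        -∑ m ∈ Finset.range (n - 1), (a (n - m) * t + b (n - m)) * y ^ m := by
      have hyn : y ^ n = y * y ^ (n - 1) := by
        rw [← pow_succ', show (n-1)+1 = n by omega]
      nlinarith [key, hyn]
    rcases Nat.lt_or_ge n 2 with h2 | h2
    · -- n = 1
      have hn1 : n = 1 := by omega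
      subst hn1
      simp only [Nat.sub_self, Finset.range_zero, Finset.sum_empty, neg_zero,
        pow_zero, mul_one] at hfac
      rw [hfac]
      simp only [abs_zero, zero_mul]
      positivity
    · -- n ≥ 2
      have habs : |y + (a 1 * t + b 1)| * |y| ^ (n - 1) ≤ A * t * |y| ^ (n - 2) := by
        calc |y + (a 1 * t + b 1)| * |y| ^ (n - 1)
            = |(y + (a 1 * t + b 1)) * y ^ (n - 1)| := by
              rw [abs_mul, abs_pow]
          _ = |∑ m ∈ Finset.range (n - 1), (a (n - m) * t + b (n - m)) * y ^ m| := by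
              rw [hfac, abs_neg]
          _ ≤ ∑ m ∈ Finset.range (n - 1), |(a (n - m) * t + b (n - m)) * y ^ m| :=
              Finset.abs_sum_le_sum_abs _ _
          _ ≤ ∑ m ∈ Finset.range (n - 1), (|a (n - m)| + |b (n - m)|) * (t * |y| ^ (n - 2)) := by
              apply Finset.sum_le_sum
              intro m hm
              rw [Finset.mem_range] at hm
              rw [abs_mul, abs_pow]
              have h1 : |a (n - m) * t + b (n - m)| ≤ |a (n - m)| * t + |b (n - m)| := by
                calc |a (n - m) * t + b (n - m)| ≤ |a (n - m) * t| + |b (n - m)| := abs_add_le _ _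
                  _ = |a (n - m)| * t + |b (n - m)| := by rw [abs_mul, abs_of_pos ht0]
              have h2 : |y| ^ m ≤ |y| ^ (n - 2) := pow_le_pow_right₀ hy1 (by omega)
              have h3 : |a (n - m)| * t + |b (n - m)| ≤ (|a (n - m)| + |b (n - m)|) * t := by
                have : |b (n - m)| ≤ |b (n - m)| * t := le_mul_of_one_le_right (abs_nonneg _) ht1
                nlinarith [abs_nonneg (a (n-m)), abs_nonneg (b (n-m))]
              have h4 : (0:ℝ) ≤ |y| ^ m := by positivity
              calc |a (n - m) * t + b (n - m)| * |y| ^ m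
                  ≤ ((|a (n - m)| + |b (n - m)|) * t) * |y| ^ m := by
                    apply mul_le_mul_of_nonneg_right _ h4
                    linarith
                _ ≤ ((|a (n - m)| + |b (n - m)|) * t) * |y| ^ (n - 2) := by
                    apply mul_le_mul_of_nonneg_left h2
                    positivity
                _ = (|a (n - m)| + |b (n - m)|) * (t * |y| ^ (n - 2)) := by ring
          _ = (∑ m ∈ Finset.range (n - 1), (|a (n - m)| + |b (n - m)|)) * (t * |y| ^ (n - 2)) := by
              rw [Finset.sum_mul]
          _ ≤ A * (t * |y| ^ (n - 2)) := by
              apply mul_le_mul_of_nonneg_right _ (by positivity)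
              rw [hA]
              apply Finset.sum_le_sum_of_subset_of_nonneg
                (Finset.range_subset_range.mpr (by omega))
              intro m _ _; positivity
          _ = A * t * |y| ^ (n - 2) := by ring
      have hpow : |y| ^ (n - 1) = |y| * |y| ^ (n - 2) := by
        rw [← pow_succ', show (n-2)+1 = n - 1 by omega]
      rw [hpow, ← mul_assoc] at habs
      have hppos : (0:ℝ) < |y| ^ (n - 2) := by positivity
      exact le_of_mul_le_mul_right habs hppos
  -- more constants
  obtain ⟨R₁, hR₁⟩ : ∃ R₁ : ℝ, R₁ = 1 + 4 * A / α := ⟨_, rfl⟩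
  obtain ⟨D, hD⟩ : ∃ D : ℝ, D = 2 * A / α := ⟨_, rfl⟩
  have hR₁1 : 1 ≤ R₁ := by
    rw [hR₁]
    nlinarith [div_nonneg (by linarith : (0:ℝ) ≤ 4*A) hα0.le]
  have hD0 : 0 ≤ D := by rw [hD]; positivity
  have hAR : A ≤ α / 4 * R₁ := by
    have : α / 4 * R₁ = α / 4 + A := by
      rw [hR₁]; field_simp
    linarith
  obtain ⟨t₀, ht₀⟩ : ∃ t₀ : ℝ, t₀ = max T 0 + 1 + 4 * |b 1| / α
      + (|b 1| + n * (D + R₁) + 1) / α + 2 * R₁ / α := ⟨_, rfl⟩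
  have hprops : ∀ t, t₀ ≤ t → T < t ∧ 1 ≤ t ∧ 4 * |b 1| ≤ α * t ∧
      |b 1| + n * (D + R₁) + 1 ≤ α * t ∧ R₁ < α * t / 2 := by
    intro t ht
    rw [ht₀] at ht
    have h1 : 0 ≤ 4 * |b 1| / α := by positivity
    have h2 : 0 ≤ (|b 1| + n * (D + R₁) + 1) / α := by positivity
    have h3 : 0 ≤ 2 * R₁ / α := by positivity
    have hmT : T ≤ max T 0 := le_max_left _ _
    have hm0 : (0:ℝ) ≤ max T 0 := le_max_right _ _
    have key : ∀ c : ℝ, 0 ≤ c → c / α ≤ t → c ≤ α * t := by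
      intro c hc hct
      rw [div_le_iff₀ hα0] at hct
      nlinarith
    refine ⟨by linarith, by linarith, key _ (by positivity) (by linarith),
      key _ (by positivity) (by linarith), ?_⟩
    have h5 : 2 * R₁ / α ≤ t - 1 := by linarith
    rw [div_le_iff₀ hα0] at h5
    nlinarith
  -- dichotomy
  have hdich : ∀ t, t₀ ≤ t → ∀ j : Fin n, R₁ < |x j t| →
      α * t / 2 ≤ |x j t| ∧ |x j t + (a 1 * t + b 1)| ≤ D := by
    intro t ht j hbig
    obtain ⟨hT, h1, hb4, hbn, hRt⟩ := hprops t ht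
    have ht0 : (0:ℝ) < t := by linarith
    have hy1 : 1 ≤ |x j t| := by linarith
    have hL := L1 t hT h1 j hy1
    set y := x j t with hy
    set c₁ := a 1 * t + b 1 with hc₁
    have hclose1 : |y + c₁| ≤ α / 4 * t := by
      have hR0 : (0:ℝ) < R₁ := by linarith
      have h5 : |y + c₁| * R₁ ≤ |y + c₁| * |y| :=
        mul_le_mul_of_nonneg_left hbig.le (abs_nonneg _)
      have h6 : A * t ≤ (α / 4 * R₁) * t := mul_le_mul_of_nonneg_right hAR ht0.le
      have := le_of_mul_le_mul_right (by linarith : |y + c₁| * R₁ ≤ (α/4*t) * R₁) hR0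
      linarith
    have hc₁lb : α * t - |b 1| ≤ |c₁| := by
      have h := abs_sub_abs_le_abs_sub (a 1 * t) (-(b 1))
      rw [sub_neg_eq_add, abs_neg] at h
      rw [abs_mul, abs_of_pos ht0, ← hα] at h
      rw [hc₁]; linarith
    have hylb : α * t / 2 ≤ |y| := by
      have h : |c₁| - |y + c₁| ≤ |y| := by
        calc |c₁| - |y + c₁| ≤ |c₁ - (y + c₁)| := abs_sub_abs_le_abs_sub _ _
          _ = |y| := by rw [show c₁ - (y + c₁) = -y by ring, abs_neg]
      nlinarith
    refine ⟨hylb, ?_⟩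
    have h8 : |y + c₁| * (α * t / 2) ≤ |y + c₁| * |y| :=
      mul_le_mul_of_nonneg_left hylb (abs_nonneg _)
    have h9 : |y + c₁| * (α * t / 2) ≤ A * t := by linarith
    rw [hD, le_div_iff₀ hα0]
    nlinarith
  -- exactly one big root for each large t
  have hone : ∀ t, t₀ ≤ t → ∃ i : Fin n, ∀ j : Fin n, R₁ < |x j t| ↔ j = i := by
    intro t ht
    obtain ⟨hT, h1, hb4, hbn, hRt⟩ := hprops t ht
    have ht0 : (0:ℝ) < t := by linarith
    classical
    set c₁ := a 1 * t + b 1 with hc₁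
    set Bs : Finset (Fin n) := Finset.univ.filter (fun i => R₁ < |x i t|) with hBs
    set Cs : Finset (Fin n) := Finset.univ.filter (fun i => ¬ (R₁ < |x i t|)) with hCs
    set m := Bs.card with hm
    have hmn : m ≤ n := by
      calc m ≤ Finset.univ.card := Finset.card_filter_le _ _
        _ = n := by simp
    have hcn : Cs.card ≤ n := by
      calc Cs.card ≤ Finset.univ.card := Finset.card_filter_le _ _
        _ = n := by simp
    have hid : ((m:ℝ) - 1) * c₁ = (∑ i ∈ Bs, (x i t + c₁)) + ∑ i ∈ Cs, x i t := by
      have hsplit := Finset.sum_filter_add_sum_filter_not Finset.univ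
        (fun i => R₁ < |x i t|) (fun i => x i t)
      have hS := hsum t hT
      have hadd : (∑ i ∈ Bs, (x i t + c₁)) = (∑ i ∈ Bs, x i t) + m * c₁ := by
        rw [Finset.sum_add_distrib, Finset.sum_const, nsmul_eq_mul, hm]
      rw [hadd]
      have hBsum : (∑ i ∈ Bs, x i t) = -c₁ - ∑ i ∈ Cs, x i t := by
        rw [hBs, hCs]; rw [hS] at hsplit; linarith [hsplit]
      rw [hBsum]; ring
    have hBbd : ∀ i ∈ Bs, |x i t + c₁| ≤ D := by
      intro i hi
      rw [hBs, Finset.mem_filter] at hi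
      exact (hdich t ht i hi.2).2
    have hSbd : ∀ i ∈ Cs, |x i t| ≤ R₁ := by
      intro i hi
      rw [hCs, Finset.mem_filter] at hi
      linarith [not_lt.mp hi.2]
    have habs : |((m:ℝ) - 1) * c₁| ≤ n * D + n * R₁ := by
      rw [hid]
      have hb1 : |∑ i ∈ Bs, (x i t + c₁)| ≤ (m:ℝ) * D := by
        calc |∑ i ∈ Bs, (x i t + c₁)| ≤ ∑ i ∈ Bs, |x i t + c₁| :=
              Finset.abs_sum_le_sum_abs _ _
          _ ≤ (m:ℝ) * D := by
              have := Finset.sum_le_card_nsmul Bs (fun i => |x i t + c₁|) D hBbd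
              rwa [nsmul_eq_mul, ← hm] at this
      have hb2 : |∑ i ∈ Cs, x i t| ≤ (Cs.card : ℝ) * R₁ := by
        calc |∑ i ∈ Cs, x i t| ≤ ∑ i ∈ Cs, |x i t| := Finset.abs_sum_le_sum_abs _ _
          _ ≤ (Cs.card : ℝ) * R₁ := by
              have := Finset.sum_le_card_nsmul Cs (fun i => |x i t|) R₁ hSbd
              rwa [nsmul_eq_mul] at this
      have hmr : (m:ℝ) ≤ n := by exact_mod_cast hmn
      have hcr : (Cs.card:ℝ) ≤ n := by exact_mod_cast hcn
      have hR0 : (0:ℝ) ≤ R₁ := by linarith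
      calc |(∑ i ∈ Bs, (x i t + c₁)) + ∑ i ∈ Cs, x i t|
          ≤ |∑ i ∈ Bs, (x i t + c₁)| + |∑ i ∈ Cs, x i t| := abs_add_le _ _
        _ ≤ (m:ℝ) * D + (Cs.card : ℝ) * R₁ := by linarith
        _ ≤ n * D + n * R₁ := by nlinarith
    have hc₁lb : n * (D + R₁) + 1 ≤ |c₁| := by
      have h := abs_sub_abs_le_abs_sub (a 1 * t) (-(b 1))
      rw [sub_neg_eq_add, abs_neg] at h
      rw [abs_mul, abs_of_pos ht0, ← hα] at h
      rw [hc₁]; linarith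
    have hm1 : m = 1 := by
      by_contra hne
      have h1m : (1:ℝ) ≤ |(m:ℝ) - 1| := by
        rcases Nat.lt_or_ge m 1 with h | h
        · have hz : m = 0 := by omega
          rw [hz]; norm_num
        · have h2 : 2 ≤ m := by omega
          have h2r : (2:ℝ) ≤ (m:ℝ) := by exact_mod_cast h2
          rw [abs_of_nonneg (by linarith)]; linarith
      rw [abs_mul] at habs
      nlinarith [abs_nonneg c₁]
    obtain ⟨i, hi⟩ := Finset.card_eq_one.mp hm1
    refine ⟨i, fun j => ?_⟩
    constructor
    · intro hj
      have hjm : j ∈ Bs := by rw [hBs, Finset.mem_filter]; exact ⟨Finset.mem_univ _, hj⟩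
      rw [hi, Finset.mem_singleton] at hjm
      exact hjm
    · intro hj
      subst hj
      have hjm : j ∈ Bs := by rw [hi]; exact Finset.mem_singleton_self _
      rw [hBs, Finset.mem_filter] at hjm
      exact hjm.2
  -- the distinguished index
  obtain ⟨i₀, hi₀⟩ := hone t₀ le_rfl
  have hbig₀ : R₁ < |x i₀ t₀| := (hi₀ i₀).mpr rfl
  -- by connectedness, i₀ stays the big root for all t ≥ t₀
  have hcontabs : ContinuousOn (fun s => |x i₀ s|) (Set.Ioi T) := (hcont i₀).abs
  have hS : ∀ t, t₀ ≤ t → α * t / 2 ≤ |x i₀ t| := by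
    by_contra hcon
    push_neg at hcon
    obtain ⟨t₁, ht₁, hlt⟩ := hcon
    have hUopen : IsOpen (Set.Ioi T ∩ (fun s => |x i₀ s|) ⁻¹' Set.Ioi R₁) :=
      hcontabs.isOpen_inter_preimage isOpen_Ioi isOpen_Ioi
    have hVcont : ContinuousOn (fun s => α * s / 2 - |x i₀ s|) (Set.Ioi T) :=
      (continuous_const.mul continuous_id |>.div_const 2).continuousOn.sub hcontabs
    have hVopen : IsOpen (Set.Ioi T ∩ (fun s => α * s / 2 - |x i₀ s|) ⁻¹' Set.Ioi 0) :=
      hVcont.isOpen_inter_preimage isOpen_Ioi isOpen_Ioi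
    have hcover : Set.Ici t₀ ⊆ (Set.Ioi T ∩ (fun s => |x i₀ s|) ⁻¹' Set.Ioi R₁) ∪
        (Set.Ioi T ∩ (fun s => α * s / 2 - |x i₀ s|) ⁻¹' Set.Ioi 0) := by
      intro s hs
      rw [Set.mem_Ici] at hs
      obtain ⟨hT, h1, _, _, hRt⟩ := hprops s hs
      rcases lt_or_ge R₁ (|x i₀ s|) with h | h
      · exact Or.inl ⟨hT, h⟩
      · exact Or.inr ⟨hT, by simp only [Set.mem_preimage, Set.mem_Ioi]; linarith⟩
    have hUne : (Set.Ici t₀ ∩ (Set.Ioi T ∩ (fun s => |x i₀ s|) ⁻¹' Set.Ioi R₁)).Nonempty := by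
      refine ⟨t₀, Set.mem_Ici.mpr le_rfl, (hprops t₀ le_rfl).1, hbig₀⟩
    have hVne : (Set.Ici t₀ ∩ (Set.Ioi T ∩ (fun s => α * s / 2 - |x i₀ s|) ⁻¹' Set.Ioi 0)).Nonempty := by
      refine ⟨t₁, Set.mem_Ici.mpr ht₁, (hprops t₁ ht₁).1, ?_⟩
      simp only [Set.mem_preimage, Set.mem_Ioi]; linarith
    obtain ⟨s, hsI, hsU, hsV⟩ := isPreconnected_Ici _ _ hUopen hVopen hcover hUne hVne
    rw [Set.mem_Ici] at hsI
    have h1 := (hdich s hsI i₀ hsU.2).1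
    have h2 : (0:ℝ) < α * s / 2 - |x i₀ s| := hsV.2
    linarith
  refine ⟨i₀, ?_, ?_⟩
  · -- tendsto
    have hlin : Tendsto (fun t : ℝ => α * t / 2) atTop atTop := by
      apply Tendsto.atTop_div_const (by norm_num : (0:ℝ) < 2)
      exact Tendsto.const_mul_atTop hα0 tendsto_id
    apply tendsto_atTop_mono' atTop _ hlin
    filter_upwards [eventually_ge_atTop t₀] with t ht
    exact hS t ht
  · -- others bounded
    intro j hj
    refine ⟨R₁, ?_⟩
    filter_upwards [eventually_ge_atTop t₀] with t ht
    by_contra hcontra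
    push_neg at hcontra
    obtain ⟨i, hi⟩ := hone t ht
    have hji : j = i := (hi j).mp hcontra
    have hi₀i : i₀ = i := by
      apply (hi i₀).mp
      have := hS t ht
      have := (hprops t ht).2.2.2.2
      linarith
    exact hj (hji.trans hi₀i.symm)
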